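/- arXiv:2108.01398 — 6 statements merged into one kernel-verified Lean document; each statement's English description precedes it below -/
import Mathlib

section
/- In the Baumslag–Solitar group H = BS(3,5) = ⟨c, d ∣ d⁻¹c³d = c⁵⟩, the commutator [d⁻¹cd, c] belongs to every finite-index subgroup of H. -/
/-- Relators of the Baumslag–Solitar group BS(n,m) = ⟨c, d ∣ d⁻¹cⁿd = cᵐ⟩,
with generator 0 ↦ c and 1 ↦ d. -/
def bsRels (n m : ℤ) : Set (FreeGroup (Fin 2)) :=
  {(FreeGroup.of 1)⁻¹ * (FreeGroup.of 0) ^ n * (FreeGroup.of 1) * (FreeGroup.of 0) ^ (-m)}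

/-- The Baumslag–Solitar group BS(n,m). -/
abbrev BS (n m : ℤ) : Type := PresentedGroup (bsRels n m)

/-- In a finite group, if D⁻¹C³D = C⁵ then D⁻¹CD commutes with C. -/
lemma key_commute {Q : Type*} [Group Q] [Finite Q] (C D : Q)
    (h : D⁻¹ * C ^ 3 * D = C ^ 5) : Commute (D⁻¹ * C * D) C := by
  set k := orderOf C with hk
  have hkpos : 0 < k := orderOf_pos C
  have hsc : SemiconjBy D⁻¹ (C ^ 3) (C ^ 5) := by
    have := congrArg (· * D⁻¹) h
    simpa [SemiconjBy, mul_assoc] using this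
  have horder : orderOf (C ^ 3) = orderOf (C ^ 5) := SemiconjBy.orderOf_eq _ hsc
  have h3 : orderOf (C ^ 3) = k / Nat.gcd k 3 := orderOf_pow C
  have h5 : orderOf (C ^ 5) = k / Nat.gcd k 5 := orderOf_pow C
  have hg3 : Nat.gcd k 3 ∣ k := Nat.gcd_dvd_left _ _
  have hg5 : Nat.gcd k 5 ∣ k := Nat.gcd_dvd_left _ _
  have heq : Nat.gcd k 3 = Nat.gcd k 5 := by
    have h1 : k / Nat.gcd k 3 = k / Nat.gcd k 5 := by rw [← h3, ← h5, horder]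
    have hpos3 : 0 < Nat.gcd k 3 := Nat.gcd_pos_of_pos_right _ (by norm_num)
    have hpos5 : 0 < Nat.gcd k 5 := Nat.gcd_pos_of_pos_right _ (by norm_num)
    have e3 : k / Nat.gcd k 3 * Nat.gcd k 3 = k := Nat.div_mul_cancel hg3
    have e5 : k / Nat.gcd k 5 * Nat.gcd k 5 = k := Nat.div_mul_cancel hg5
    have hqpos : 0 < k / Nat.gcd k 3 := Nat.div_pos (Nat.le_of_dvd hkpos hg3) hpos3
    have := e5
    rw [← h1] at this
    exact Nat.eq_of_mul_eq_mul_left hqpos (by rw [e3, this])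
  have hcop : Nat.gcd k 3 = 1 := by
    have hd3 : Nat.gcd k 3 ∣ 3 := Nat.gcd_dvd_right _ _
    have hd5 : Nat.gcd k 3 ∣ 5 := heq ▸ Nat.gcd_dvd_right k 5
    exact Nat.eq_one_of_dvd_one (by simpa using Nat.dvd_gcd hd3 hd5)
  -- Bezout: 1 = 3*a + k*b over ℤ
  have hgcdZ : Int.gcd 3 (k : ℤ) = 1 := by
    rw [Int.gcd]
    simpa [Nat.gcd_comm] using hcop
  obtain ⟨a, b, hab⟩ : ∃ a b : ℤ, 3 * a + (k : ℤ) * b = 1 := by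
    refine ⟨Int.gcdA 3 (k : ℤ), Int.gcdB 3 (k : ℤ), ?_⟩
    have := Int.gcd_eq_gcd_ab 3 (k : ℤ)
    rw [hgcdZ] at this
    push_cast at this
    linarith
  have hCk : C ^ (k : ℤ) = 1 := by
    rw [zpow_natCast, hk, pow_orderOf_eq_one]
  have hC : C = (C ^ (3 : ℤ)) ^ a := by
    rw [← zpow_mul]
    conv_lhs => rw [show C = C ^ (1 : ℤ) by simp]
    rw [← hab, zpow_add, zpow_mul, zpow_mul, hCk, one_zpow, mul_one]
  have hconj : D⁻¹ * C * D = C ^ ((5 : ℤ) * a) := by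
    conv_lhs => rw [hC]
    rw [show D⁻¹ * (C ^ (3:ℤ)) ^ a * D = (D⁻¹ * (C ^ (3:ℤ)) * D⁻¹⁻¹) ^ a by
      rw [conj_zpow]; rw [inv_inv], inv_inv]
    rw [show (3:ℤ) = ((3:ℕ):ℤ) by norm_num, zpow_natCast, h, ← zpow_natCast C 5, ← zpow_mul]
    norm_num
  rw [hconj]
  exact (Commute.refl C).zpow_left _

theorem commutator_mem_of_finiteIndex
    (c d : BS 3 5) (hc : c = PresentedGroup.of 0) (hd : d = PresentedGroup.of 1)
    (K : Subgroup (BS 3 5)) (hK : K.FiniteIndex) :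
    (d⁻¹ * c * d)⁻¹ * c⁻¹ * (d⁻¹ * c * d) * c ∈ K := by
  -- the defining relation in BS 3 5
  have hrel : d⁻¹ * c ^ 3 * d = c ^ 5 := by
    subst hc hd
    have hmem : ((FreeGroup.of 1)⁻¹ * (FreeGroup.of 0) ^ (3:ℤ) * (FreeGroup.of 1)
        * (FreeGroup.of 0) ^ (-(5:ℤ)) : FreeGroup (Fin 2)) ∈
        Subgroup.normalClosure (bsRels 3 5) :=
      Subgroup.subset_normalClosure rfl
    have h1 : (QuotientGroup.mk ((FreeGroup.of 1)⁻¹ * (FreeGroup.of 0) ^ (3:ℤ) * (FreeGroup.of 1)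
        * (FreeGroup.of 0) ^ (-(5:ℤ))) : BS 3 5) = 1 :=
      (QuotientGroup.eq_one_iff _).mpr hmem
    have h2 : ((PresentedGroup.of 1 : BS 3 5))⁻¹ * (PresentedGroup.of 0) ^ (3:ℤ)
        * (PresentedGroup.of 1) * (PresentedGroup.of 0) ^ (-(5:ℤ)) = 1 := h1
    calc (PresentedGroup.of 1 : BS 3 5)⁻¹ * (PresentedGroup.of 0) ^ 3 * (PresentedGroup.of 1)
        = ((PresentedGroup.of 1 : BS 3 5)⁻¹ * (PresentedGroup.of 0) ^ (3:ℤ)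
          * (PresentedGroup.of 1) * (PresentedGroup.of 0) ^ (-(5:ℤ)))
          * (PresentedGroup.of 0) ^ (5:ℤ) := by group
      _ = (PresentedGroup.of 0 : BS 3 5) ^ 5 := by rw [h2, one_mul]; norm_num [zpow_ofNat]
  set N := K.normalCore with hN
  haveI : N.FiniteIndex := Subgroup.finiteIndex_normalCore K
  haveI : Finite (BS 3 5 ⧸ N) := N.finite_quotient_of_finiteIndex
  set φ := QuotientGroup.mk' N with hφ
  have hrelQ : (φ d)⁻¹ * (φ c) ^ 3 * (φ d) = (φ c) ^ 5 := by
    rw [← map_inv, ← map_pow, ← map_pow, ← map_mul, ← map_mul, hrel]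
  have hcomm := key_commute (φ c) (φ d) hrelQ
  have h1 : φ ((d⁻¹ * c * d)⁻¹ * c⁻¹ * (d⁻¹ * c * d) * c) = 1 := by
    simp only [map_mul, map_inv]
    have := hcomm.eq
    rw [show ((φ d)⁻¹ * φ c * φ d)⁻¹ * (φ c)⁻¹ * ((φ d)⁻¹ * φ c * φ d) * φ c
      = ((φ d)⁻¹ * φ c * φ d)⁻¹ * (φ c)⁻¹ * (φ c * ((φ d)⁻¹ * φ c * φ d)) * 1 * 1 by
        rw [← this]; group]
    group
  have hmemN : (d⁻¹ * c * d)⁻¹ * c⁻¹ * (d⁻¹ * c * d) * c ∈ N := by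
    rwa [← QuotientGroup.ker_mk' N, MonoidHom.mem_ker]
  exact K.normalCore_le hmemN
end

section
/- For any homomorphism φ from BS(3,5) = ⟨c, d ∣ d⁻¹c³d = c⁵⟩ to a finite group K, the order of φ(c) is not divisible by 3, and consequently φ(c) lies in the cyclic subgroup generated by φ(c)³. -/
theorem orderOf_image_c_not_dvd_three
    (c d : BS 3 5) (hc : c = PresentedGroup.of 0) (hd : d = PresentedGroup.of 1)
    (K : Type) [Group K] [Finite K] (φ : BS 3 5 →* K) :
    ¬ (3 ∣ orderOf (φ c)) ∧ φ c ∈ Subgroup.zpowers ((φ c) ^ 3) := by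
  -- the relation holds in BS 3 5
  have hrel0 : (d⁻¹ * c ^ (3 : ℤ) * d * c ^ (-(5 : ℤ)) : BS 3 5) = 1 := by
    subst hc hd
    have : ((PresentedGroup.mk (bsRels 3 5))
        ((FreeGroup.of 1)⁻¹ * (FreeGroup.of 0) ^ (3:ℤ) * (FreeGroup.of 1)
          * (FreeGroup.of 0) ^ (-(5:ℤ))) : BS 3 5) = 1 := by
      apply (QuotientGroup.eq_one_iff _).mpr
      exact Subgroup.subset_normalClosure rfl
    simpa [PresentedGroup.of, map_mul, map_zpow, map_inv] using this
  set x := φ c with hx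
  set y := φ d with hy
  have hrel : y⁻¹ * x ^ (3 : ℤ) * y * x ^ (-(5 : ℤ)) = 1 := by
    have := congrArg φ hrel0
    simpa [map_mul, map_zpow, map_inv] using this
  have hconj : y * x ^ (5 : ℕ) = x ^ (3 : ℕ) * y := by
    have h1 : y⁻¹ * x ^ (3 : ℤ) * y = x ^ (5 : ℤ) := by
      have := mul_eq_one_iff_eq_inv.mp hrel
      rw [this]; group
    have h2 : x ^ (3 : ℤ) * y = y * x ^ (5 : ℤ) := by
      rw [← h1]; group
    rw [show ((5:ℤ)) = ((5:ℕ):ℤ) by norm_num, show ((3:ℤ)) = ((3:ℕ):ℤ) by norm_num,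
      zpow_natCast, zpow_natCast] at h2
    exact h2.symm
  have hsemi : SemiconjBy y (x ^ (5:ℕ)) (x ^ (3:ℕ)) := hconj
  have horder : orderOf (x ^ (5:ℕ)) = orderOf (x ^ (3:ℕ)) := hsemi.orderOf_eq y
  set n := orderOf x with hn
  have hnpos : 0 < n := orderOf_pos x
  have h35 : n / Nat.gcd n 5 = n / Nat.gcd n 3 := by
    rw [hn, ← orderOf_pow x, ← orderOf_pow x]; exact horder
  have hnot3 : ¬ (3 ∣ n) := by
    intro h3
    have hg3 : Nat.gcd n 3 = 3 := Nat.gcd_eq_right h3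
    set g := Nat.gcd n 5 with hg
    have hgn : g ∣ n := Nat.gcd_dvd_left n 5
    have hg5 : g ∣ 5 := Nat.gcd_dvd_right n 5
    rw [hg3] at h35
    -- n / g = n / 3, with 3 ∣ n and g ∣ n
    obtain ⟨q, hq⟩ := h3
    obtain ⟨p, hp⟩ := hgn
    have hqpos : 0 < q := by omega
    have hq' : n / 3 = q := by omega
    have hp' : n / g = p := by
      have hgpos : 0 < g := Nat.pos_of_dvd_of_pos hg5 (by norm_num)
      rw [hp]; exact Nat.mul_div_cancel_left p hgpos
    have : p = q := by rw [← hp', ← hq', h35]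
    subst this
    have hge : g = 3 := by
      have := hq.symm.trans hp
      exact (Nat.eq_of_mul_eq_mul_right hqpos (by omega)).symm
    rw [hge] at hg5
    omega
  refine ⟨hnot3, ?_⟩
  have hcop : Nat.gcd 3 n = 1 := by
    have h1 : Nat.gcd 3 n ∣ 3 := Nat.gcd_dvd_left 3 n
    have h2 : Nat.gcd 3 n ∣ n := Nat.gcd_dvd_right 3 n
    have h3 : ¬ (3 ∣ n) := hnot3
    rcases (Nat.le_of_dvd (by norm_num) h1 : Nat.gcd 3 n ≤ 3) with _
    interval_cases h : Nat.gcd 3 n <;> omega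
  have bez : (1 : ℤ) = 3 * Int.gcdA 3 n + n * Int.gcdB 3 n := by
    have := Int.gcd_eq_gcd_ab 3 n
    simpa [Int.gcd, hcop] using this
  rw [Subgroup.mem_zpowers_iff]
  refine ⟨Int.gcdA 3 n, ?_⟩
  have hxn : x ^ (n : ℤ) = 1 := by
    rw [zpow_natCast]; exact pow_orderOf_eq_one x
  calc (x ^ 3) ^ Int.gcdA 3 n = x ^ (3 * Int.gcdA 3 n) := by
        rw [← zpow_natCast x 3, ← zpow_mul]; norm_num
    _ = x ^ (3 * Int.gcdA 3 n) * (x ^ (n:ℤ)) ^ Int.gcdB 3 n := by rw [hxn]; group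
    _ = x ^ (3 * Int.gcdA 3 n + n * Int.gcdB 3 n) := by rw [← zpow_mul, ← zpow_add]
    _ = x := by rw [← bez, zpow_one]
end

section
/- For any homomorphism φ from BS(3,5) = ⟨c, d ∣ d⁻¹c³d = c⁵⟩ to a finite group K, the commutator [φ(d)⁻¹φ(c)φ(d), φ(c)] is trivial; i.e. [d⁻¹cd, c] lies in the kernel of every homomorphism from BS(3,5) to a finite group. -/
theorem commutator_in_kernel_of_finite
    (c d : BS 3 5) (hc : c = PresentedGroup.of 0) (hd : d = PresentedGroup.of 1)
    (K : Type) [Group K] [Finite K] (φ : BS 3 5 →* K) :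
    ((φ d)⁻¹ * φ c * φ d)⁻¹ * (φ c)⁻¹ * ((φ d)⁻¹ * φ c * φ d) * φ c = 1 := by
  set x := φ c with hx
  set y := φ d with hy
  -- the defining relation holds in BS 3 5
  have hrel : d⁻¹ * c ^ (3 : ℤ) * d * c ^ (-5 : ℤ) = 1 := by
    rw [hc, hd]
    have hmem : (FreeGroup.of 1)⁻¹ * (FreeGroup.of 0) ^ (3 : ℤ) * (FreeGroup.of 1) *
        (FreeGroup.of 0) ^ (-(5 : ℤ)) ∈ Subgroup.normalClosure (bsRels 3 5) :=
      Subgroup.subset_normalClosure rfl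
    have := (QuotientGroup.eq_one_iff _).mpr hmem
    simp [PresentedGroup.of, QuotientGroup.mk_mul, QuotientGroup.mk_inv,
      QuotientGroup.mk_zpow] at this ⊢
    exact this
  -- push through φ
  have hK : y⁻¹ * x ^ (3 : ℤ) * y * x ^ (-5 : ℤ) = 1 := by
    have := congrArg φ hrel
    simpa [map_mul, map_inv, map_zpow, hx, hy] using this
  have h5 : y⁻¹ * x ^ (3 : ℕ) * y = x ^ (5 : ℕ) := by
    have h : y⁻¹ * x ^ (3 : ℤ) * y = x ^ (5 : ℤ) := by
      have h2 := hK
      rw [show ((-5 : ℤ)) = -(5 : ℤ) from rfl, zpow_neg, mul_inv_eq_one] at h2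
      exact h2
    have h3 : x ^ (3 : ℤ) = x ^ (3 : ℕ) := by norm_cast
    have h5' : x ^ (5 : ℤ) = x ^ (5 : ℕ) := by norm_cast
    rw [h3, h5'] at h
    exact h
  -- orders of x^3 and x^5 coincide (they are conjugate)
  have hsc : SemiconjBy y⁻¹ (x ^ (3 : ℕ)) (x ^ (5 : ℕ)) := by
    unfold SemiconjBy
    rw [← h5]; group
  have hord : orderOf (x ^ (3 : ℕ)) = orderOf (x ^ (5 : ℕ)) := hsc.orderOf_eq y⁻¹
  set n := orderOf x with hn
  have hgcd : Nat.gcd n 3 = Nat.gcd n 5 := by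
    have h3 : orderOf (x ^ (3 : ℕ)) = n / Nat.gcd n 3 := orderOf_pow x
    have h5' : orderOf (x ^ (5 : ℕ)) = n / Nat.gcd n 5 := orderOf_pow x
    have hnpos : 0 < n := by
      exact orderOf_pos x
    have h3d : Nat.gcd n 3 ∣ n := Nat.gcd_dvd_left n 3
    have h5d : Nat.gcd n 5 ∣ n := Nat.gcd_dvd_left n 5
    have heq : n / Nat.gcd n 3 = n / Nat.gcd n 5 := by rw [← h3, ← h5', hord]
    have e3 : n / (n / Nat.gcd n 3) = Nat.gcd n 3 := Nat.div_div_self h3d hnpos.ne'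
    have e5 : n / (n / Nat.gcd n 5) = Nat.gcd n 5 := Nat.div_div_self h5d hnpos.ne'
    rw [← e3, ← e5, heq]
  have hcop : Nat.Coprime n 3 := by
    have hd35 : Nat.gcd n 3 ∣ 1 := by
      have a3 : Nat.gcd n 3 ∣ 3 := Nat.gcd_dvd_right n 3
      have a5 : Nat.gcd n 3 ∣ 5 := hgcd ▸ Nat.gcd_dvd_right n 5
      simpa using Nat.dvd_gcd a3 a5
    exact Nat.eq_one_of_dvd_one hd35 -- Coprime is gcd = 1
  -- x is a power of x^3, hence y⁻¹ x y is a power of x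
  have hcomm : Commute (y⁻¹ * x * y) x := by
    obtain ⟨m, hmx⟩ := exists_pow_eq_self_of_coprime (hcop.symm : Nat.Coprime 3 n)
    have key : y⁻¹ * x * y = (x ^ (5 : ℕ)) ^ m := by
      calc y⁻¹ * x * y = y⁻¹ * (x ^ (3:ℕ)) ^ m * y := by rw [hmx]
        _ = (y⁻¹ * x ^ (3:ℕ) * y) ^ m := by
            have := (conj_pow (i := m) (a := y⁻¹) (b := x ^ (3:ℕ))).symm
            simpa using this
        _ = (x ^ (5:ℕ)) ^ m := by rw [h5]
    rw [key]
    exact ((Commute.refl x).pow_left 5).pow_left m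
  have h := hcomm.eq
  calc (y⁻¹ * x * y)⁻¹ * x⁻¹ * (y⁻¹ * x * y) * x
      = (y⁻¹ * x * y)⁻¹ * x⁻¹ * ((y⁻¹ * x * y) * x) := by group
    _ = (y⁻¹ * x * y)⁻¹ * x⁻¹ * (x * (y⁻¹ * x * y)) := by rw [h]
    _ = 1 := by group
end

section
/- In any group, if x and y are elements of infinite order satisfying y⁻¹xy = x⁻¹, then the subgroup generated by x and y is isomorphic to the Klein-bottle group BS(1,−1) = ⟨a, b ∣ b⁻¹ab = a⁻¹⟩. -/
def kbEps (j : ℤ) : ℤ := if Even j then 1 else -1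

lemma kbEps_succ (j : ℤ) : kbEps (j + 1) = -kbEps j := by
  unfold kbEps
  by_cases h : Even j <;> simp [h, Int.even_add_one]

lemma kbEps_pred (j : ℤ) : kbEps (j - 1) = -kbEps j := by
  have h := kbEps_succ (j - 1)
  simp only [sub_add_cancel] at h
  linarith

section Generic
variable {H : Type*} [Group H] (a b : H) (hab : b⁻¹ * a * b = a⁻¹)
include hab

lemma kb_conj_zpow (k : ℤ) : b⁻¹ * a ^ k * b = a ^ (-k) := by
  have : (b⁻¹ * a * b) ^ k = b⁻¹ * a ^ k * b := by
    rw [show b⁻¹ * a * b = b⁻¹ * a * b⁻¹⁻¹ by group, conj_zpow]; group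
  rw [← this, hab, inv_zpow, zpow_neg]

lemma kb_conj' : b * a * b⁻¹ = a⁻¹ := by
  have h2 : a = b * a⁻¹ * b⁻¹ := by
    have := congrArg (fun z => b * z * b⁻¹) hab
    rw [← this]; group
  calc b * a * b⁻¹ = (b * a⁻¹ * b⁻¹)⁻¹ := by group
  _ = a⁻¹ := by rw [← h2]

lemma kb_conj_zpow' (k : ℤ) : b * a ^ k * b⁻¹ = a ^ (-k) := by
  have := kb_conj_zpow a b⁻¹ (by simpa using kb_conj' a b hab) k
  simpa using this

lemma kb_comm (j k : ℤ) : b ^ j * a ^ k = a ^ (kbEps j * k) * b ^ j := by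
  induction j using Int.induction_on generalizing k with
  | zero => simp [kbEps]
  | succ n ih =>
      have hb : b * a ^ k = a ^ (-k) * b := by
        rw [← kb_conj_zpow' a b hab k]; group
      calc b ^ ((n : ℤ) + 1) * a ^ k = b ^ (n : ℤ) * (b * a ^ k) := by
            rw [zpow_add_one]; group
        _ = b ^ (n : ℤ) * a ^ (-k) * b := by rw [hb]; group
        _ = a ^ (kbEps (n : ℤ) * (-k)) * b ^ (n : ℤ) * b := by rw [ih (-k)]
        _ = a ^ (kbEps ((n : ℤ) + 1) * k) * b ^ ((n : ℤ) + 1) := by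
            rw [kbEps_succ, zpow_add_one,
              show -kbEps (n : ℤ) * k = kbEps (n : ℤ) * -k by ring, mul_assoc]
  | pred n ih =>
      have hb : b⁻¹ * a ^ k = a ^ (-k) * b⁻¹ := by
        rw [← kb_conj_zpow a b hab k]; group
      calc b ^ (-(n : ℤ) - 1) * a ^ k = b ^ (-(n : ℤ)) * (b⁻¹ * a ^ k) := by
            rw [zpow_sub_one]; group
        _ = b ^ (-(n : ℤ)) * a ^ (-k) * b⁻¹ := by rw [hb]; group
        _ = a ^ (kbEps (-(n : ℤ)) * (-k)) * b ^ (-(n : ℤ)) * b⁻¹ := by rw [ih (-k)]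
        _ = a ^ (kbEps (-(n : ℤ) - 1) * k) * b ^ (-(n : ℤ) - 1) := by
            rw [kbEps_pred, zpow_sub_one,
              show -kbEps (-(n : ℤ)) * k = kbEps (-(n : ℤ)) * -k by ring, mul_assoc]

end Generic

theorem closure_iso_klein_bottle
    (G : Type) [Group G] (x y : G)
    (hx : ¬ IsOfFinOrder x) (hy : ¬ IsOfFinOrder y)
    (hxy : y⁻¹ * x * y = x⁻¹) :
    Nonempty (↥(Subgroup.closure {x, y}) ≃* BS 1 (-1)) := by
  classical
  set f : Fin 2 → G := fun i => if i = 0 then x else y with hf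
  have hrel : ∀ r ∈ bsRels 1 (-1), FreeGroup.lift f r = 1 := by
    intro r hr
    simp only [bsRels, Set.mem_singleton_iff] at hr
    subst hr
    simp only [map_mul, map_inv, map_zpow, FreeGroup.lift_apply_of, hf]
    norm_num
    rw [hxy]
    group
  set φ : BS 1 (-1) →* G := PresentedGroup.toGroup hrel with hφ
  set A : BS 1 (-1) := PresentedGroup.of 0 with hA
  set B : BS 1 (-1) := PresentedGroup.of 1 with hB
  have hφA : φ A = x := by simp [hφ, hA, f, PresentedGroup.toGroup.of]
  have hφB : φ B = y := by simp [hφ, hB, f, PresentedGroup.toGroup.of]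
  -- the relation in BS
  have hrelBS : B⁻¹ * A * B = A⁻¹ := by
    have hmem : ((FreeGroup.of 1)⁻¹ * (FreeGroup.of 0) ^ (1:ℤ) * (FreeGroup.of 1) *
        (FreeGroup.of 0) ^ (-(-1):ℤ) : FreeGroup (Fin 2)) ∈
        Subgroup.normalClosure (bsRels 1 (-1)) :=
      Subgroup.subset_normalClosure rfl
    have h1 : PresentedGroup.mk (bsRels 1 (-1)) ((FreeGroup.of 1)⁻¹ * (FreeGroup.of 0) ^ (1:ℤ) *
        (FreeGroup.of 1) * (FreeGroup.of 0) ^ (-(-1):ℤ)) = 1 :=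
      (QuotientGroup.eq_one_iff _).mpr hmem
    simp only [map_mul, map_inv, map_zpow] at h1
    have h1' : B⁻¹ * A * B * A = 1 := by
      simpa [hA, hB, PresentedGroup.of] using h1
    exact eq_inv_iff_mul_eq_one.mpr h1'
  -- normal form
  have nf : ∀ g : BS 1 (-1), ∃ i j : ℤ, g = A ^ i * B ^ j := by
    intro g
    refine PresentedGroup.induction_on (C := fun g => ∃ i j : ℤ, g = A ^ i * B ^ j) g ?_
    intro w
    induction w using FreeGroup.induction_on with
    | C1 => exact ⟨0, 0, by simp⟩
    | of i =>
          fin_cases i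
          · exact ⟨1, 0, by show A = _; simp⟩
          · exact ⟨0, 1, by show B = _; simp⟩
    | inv_of i _ =>
          fin_cases i
          · exact ⟨-1, 0, by show A⁻¹ = _; simp⟩
          · exact ⟨0, -1, by show B⁻¹ = _; simp⟩
    | mul u v hu hv =>
          obtain ⟨i, j, hij⟩ := hu
          obtain ⟨k, l, hkl⟩ := hv
          refine ⟨i + kbEps j * k, j + l, ?_⟩
          rw [map_mul, hij, hkl]
          calc A ^ i * B ^ j * (A ^ k * B ^ l)
              = A ^ i * (B ^ j * A ^ k) * B ^ l := by group
            _ = A ^ i * (A ^ (kbEps j * k) * B ^ j) * B ^ l := by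
                rw [kb_comm A B hrelBS]
            _ = A ^ (i + kbEps j * k) * B ^ (j + l) := by
                rw [zpow_add, zpow_add]; group
  -- injectivity
  have hinj : Function.Injective φ := by
    rw [injective_iff_map_eq_one]
    intro g hg
    obtain ⟨i, j, rfl⟩ := nf g
    rw [map_mul, map_zpow, map_zpow, hφA, hφB] at hg
    have hyj : y ^ j = x ^ (-i) := by
      rw [zpow_neg]; exact eq_inv_of_mul_eq_one_right hg
    have hxi : x ^ (-i) = x ^ i := by
      have h1 : y⁻¹ * x ^ (-i) * y = x ^ i := by
        simpa using kb_conj_zpow x y hxy (-i)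
      have h2 : y⁻¹ * y ^ j * y = y ^ j := by group
      rw [← hyj, h2, hyj] at h1
      exact h1
    have hxinj := (injective_zpow_iff_not_isOfFinOrder).mpr hx
    have hi : i = 0 := by
      have : -i = i := hxinj hxi
      omega
    subst hi
    have hyinj := (injective_zpow_iff_not_isOfFinOrder).mpr hy
    have hj : j = 0 := by
      have : y ^ j = y ^ (0 : ℤ) := by simpa using hyj
      exact hyinj this
    subst hj
    simp
  -- range
  have hrange : φ.range = Subgroup.closure {x, y} := by
    apply le_antisymm
    · rintro g ⟨g', rfl⟩
      obtain ⟨i, j, rfl⟩ := nf g'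
      rw [map_mul, map_zpow, map_zpow, hφA, hφB]
      exact Subgroup.mul_mem _
        (Subgroup.zpow_mem _ (Subgroup.subset_closure (by simp)) i)
        (Subgroup.zpow_mem _ (Subgroup.subset_closure (by simp)) j)
    · rw [Subgroup.closure_le]
      rintro g (rfl | rfl)
      · exact ⟨A, hφA⟩
      · exact ⟨B, hφB⟩
  exact ⟨((MonoidHom.ofInjective hinj).trans (MulEquiv.subgroupCongr hrange)).symm⟩
end

section
/- Let G be a group containing elements a, b of infinite order with b⁻¹ab = a⁻¹, and suppose b lies in every finite-index subgroup of G. Then every finite-index subgroup of G contains a subgroup isomorphic to the Klein-bottle group BS(1,−1). -/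
/-- An infinite-order element has trivial zpowers only at 0. -/
lemma zpow_eq_one_of_infinite {H : Type*} [Group H] {g : H} (hg : ¬ IsOfFinOrder g)
    {m : ℤ} (h : g ^ m = 1) : m = 0 := by
  by_contra hm
  apply hg
  rw [isOfFinOrder_iff_pow_eq_one]
  refine ⟨m.natAbs, by omega, ?_⟩
  rcases Int.natAbs_eq m with he | he
  · rw [← zpow_natCast, ← he, h]
  · rw [← zpow_natCast, ← neg_neg (m.natAbs : ℤ), ← he, zpow_neg, h, inv_one]

lemma conj_zpow_left {H : Type*} [Group H] (k : ℤ) (v u : H) :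
    v⁻¹ * u ^ k * v = (v⁻¹ * u * v) ^ k := by
  have := conj_zpow (i := k) (a := v⁻¹) (b := u)
  simpa using this.symm

/-- Conjugation by powers of `v` sends `u^k` to `u^(±k)`. -/
lemma conj_pm {H : Type*} [Group H] {u v : H} (h : v⁻¹ * u * v = u⁻¹) (j : ℤ) :
    ∃ e : ℤ, (e = 1 ∨ e = -1) ∧ ∀ k : ℤ, v ^ j * u ^ k = u ^ (e * k) * v ^ j := by
  have hv : v * u * v⁻¹ = u⁻¹ := by
    have h2 : v * (v⁻¹ * u * v) * v⁻¹ = v * u⁻¹ * v⁻¹ := by rw [h]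
    have h3 : u = v * u⁻¹ * v⁻¹ := by rw [← h2]; group
    calc v * u * v⁻¹ = (v * u⁻¹ * v⁻¹)⁻¹ := by group
      _ = u⁻¹ := by rw [← h3]
  have h1 : ∀ k : ℤ, v * u ^ k = u ^ (-k) * v := by
    intro k
    have h2 : v * u ^ k * v⁻¹ = u ^ (-k) := by
      rw [← conj_zpow, hv, inv_zpow']
    calc v * u ^ k = (v * u ^ k * v⁻¹) * v := by group
      _ = u ^ (-k) * v := by rw [h2]
  have h1' : ∀ k : ℤ, v⁻¹ * u ^ k = u ^ (-k) * v⁻¹ := by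
    intro k
    have h2 : v⁻¹ * u ^ k * v = u ^ (-k) := by
      rw [conj_zpow_left, h, inv_zpow']
    calc v⁻¹ * u ^ k = (v⁻¹ * u ^ k * v) * v⁻¹ := by group
      _ = u ^ (-k) * v⁻¹ := by rw [h2]
  induction j using Int.induction_on with
  | zero => exact ⟨1, Or.inl rfl, fun k => by simp⟩
  | succ i ih =>
    obtain ⟨e, he, hek⟩ := ih
    refine ⟨-e, by omega, fun k => ?_⟩
    have hs : v ^ ((i : ℤ) + 1) = v ^ (i : ℤ) * v := by rw [zpow_add, zpow_one]
    rw [hs, mul_assoc, h1 k, ← mul_assoc, hek (-k), mul_assoc]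
    ring_nf
  | pred i ih =>
    obtain ⟨e, he, hek⟩ := ih
    refine ⟨-e, by omega, fun k => ?_⟩
    have hs : v ^ (-(i : ℤ) - 1) = v ^ (-(i : ℤ)) * v⁻¹ := by
      rw [← zpow_neg_one, ← zpow_add]; ring_nf
    rw [hs, mul_assoc, h1' k, ← mul_assoc, hek (-k), mul_assoc]
    ring_nf

/-- Normal form in BS(1,-1): every element is c^i * d^j. -/
lemma bs_normal_form (g : BS 1 (-1)) :
    ∃ i j : ℤ, g = (PresentedGroup.of 0 : BS 1 (-1)) ^ i * (PresentedGroup.of 1) ^ j := by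
  set c : BS 1 (-1) := PresentedGroup.of 0 with hc
  set d : BS 1 (-1) := PresentedGroup.of 1 with hd
  have hrel : d⁻¹ * c * d = c⁻¹ := by
    have hmem : ((FreeGroup.of 1)⁻¹ * (FreeGroup.of 0) ^ (1 : ℤ) * (FreeGroup.of 1)
        * (FreeGroup.of 0) ^ (-(-1) : ℤ) : FreeGroup (Fin 2))
        ∈ Subgroup.normalClosure (bsRels 1 (-1)) :=
      Subgroup.subset_normalClosure rfl
    have h1 : (PresentedGroup.mk (bsRels 1 (-1)))
        ((FreeGroup.of 1)⁻¹ * (FreeGroup.of 0) ^ (1 : ℤ) * (FreeGroup.of 1)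
          * (FreeGroup.of 0) ^ (-(-1) : ℤ)) = 1 :=
      (QuotientGroup.eq_one_iff _).mpr hmem
    have h2 : d⁻¹ * c * d * c = 1 := by
      simp only [map_mul, map_inv, map_zpow] at h1
      simpa [hc, hd, PresentedGroup.of, zpow_one] using h1
    have := congrArg (fun w => w * c⁻¹) h2
    simpa [mul_assoc] using this
  induction g using PresentedGroup.induction_on with
  | H z =>
    induction z using FreeGroup.induction_on with
    | C1 => exact ⟨0, 0, by simp⟩
    | of x =>
      fin_cases x
      · exact ⟨1, 0, by simp [hc, PresentedGroup.of]⟩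
      · exact ⟨0, 1, by simp [hd, PresentedGroup.of]⟩
    | inv_of x _ =>
      fin_cases x
      · exact ⟨-1, 0, by show c⁻¹ = c ^ (-1 : ℤ) * d ^ (0 : ℤ); simp⟩
      · exact ⟨0, -1, by show d⁻¹ = c ^ (0 : ℤ) * d ^ (-1 : ℤ); simp⟩
    | mul z w hz hw =>
      obtain ⟨i, j, hij⟩ := hz
      obtain ⟨k, l, hkl⟩ := hw
      obtain ⟨e, _, hek⟩ := conj_pm hrel j
      refine ⟨i + e * k, j + l, ?_⟩
      rw [map_mul, hij, hkl]
      calc c ^ i * d ^ j * (c ^ k * d ^ l)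
          = c ^ i * (d ^ j * c ^ k) * d ^ l := by group
        _ = c ^ i * (c ^ (e * k) * d ^ j) * d ^ l := by rw [hek]
        _ = c ^ (i + e * k) * d ^ (j + l) := by rw [zpow_add, zpow_add]; group

theorem bottle_lemma
    (G : Type) [Group G] (a b : G)
    (ha : ¬ IsOfFinOrder a) (hb : ¬ IsOfFinOrder b)
    (hab : b⁻¹ * a * b = a⁻¹)
    (hball : ∀ K : Subgroup G, K.FiniteIndex → b ∈ K)
    (K : Subgroup G) (hK : K.FiniteIndex) :
    ∃ S : Subgroup G, S ≤ K ∧ Nonempty (↥S ≃* BS 1 (-1)) := by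
  -- find a nonzero power of `a` in `K`
  haveI := hK
  haveI : Finite (G ⧸ K) := K.finite_quotient_of_finiteIndex
  obtain ⟨i, j, hij, heq⟩ :=
    Finite.exists_ne_map_eq_of_infinite (fun m : ℤ => ((a ^ m : G) : G ⧸ K))
  set n : ℤ := j - i with hn
  have hn0 : n ≠ 0 := by omega
  have hxK : a ^ n ∈ K := by
    have := QuotientGroup.eq.mp heq
    simpa [hn, ← zpow_neg, ← zpow_add, add_comm, sub_eq_add_neg] using this
  set x : G := a ^ n with hx
  set y : G := b with hy
  have hyK : y ∈ K := hball K hK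
  -- key relation for x, y
  have hxy : y⁻¹ * x * y = x⁻¹ := by
    rw [hx, conj_zpow_left, hab, inv_zpow', ← zpow_neg]
  -- x has infinite order
  have hxinf : ¬ IsOfFinOrder x := by
    intro hfin
    obtain ⟨m, hm, hme⟩ := isOfFinOrder_iff_pow_eq_one.mp hfin
    have h1 : a ^ (n * (m : ℤ)) = 1 := by
      rw [zpow_mul, ← hx, zpow_natCast, hme]
    have := zpow_eq_one_of_infinite ha h1
    have : (m : ℤ) ≠ 0 := by omega
    exact this (by
      rcases mul_eq_zero.mp (zpow_eq_one_of_infinite ha h1) with h | h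
      · exact absurd h hn0
      · exact h)
  -- the homomorphism from BS(1,-1)
  have hf : ∀ r ∈ bsRels 1 (-1),
      FreeGroup.lift (fun t : Fin 2 => if t = 0 then x else y) r = 1 := by
    rintro r rfl
    simp only [map_mul, map_inv, map_zpow, FreeGroup.lift_apply_of]
    norm_num
    have := congrArg (fun w => w * x) hxy
    simpa [mul_assoc] using this
  set φ : BS 1 (-1) →* G := PresentedGroup.toGroup hf with hφ
  have hφc : φ (PresentedGroup.of 0) = x := by simp [hφ, PresentedGroup.toGroup.of]
  have hφd : φ (PresentedGroup.of 1) = y := by simp [hφ, PresentedGroup.toGroup.of]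
  -- injectivity
  have hinj : Function.Injective φ := by
    rw [injective_iff_map_eq_one]
    intro g hg
    obtain ⟨i, j, rfl⟩ := bs_normal_form g
    rw [map_mul, map_zpow, map_zpow, hφc, hφd] at hg
    -- x^i * y^j = 1
    have hyj : y ^ j = x ^ (-i) := by
      rw [zpow_neg]
      exact eq_inv_of_mul_eq_one_right (by rw [← hg])
    have hxi : x ^ i = x ^ (-i) := by
      have h1 : y⁻¹ * x ^ (-i) * y = x ^ i := by
        rw [conj_zpow_left, hxy, inv_zpow']; simp
      have h2 : y⁻¹ * y ^ j * y = y ^ j := by group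
      rw [hyj] at h2
      rw [← h1, h2]
    have hi : i = 0 := by
      have h2i : x ^ (2 * i) = 1 := by
        have := congrArg (fun w => w * (x ^ (-i))⁻¹) hxi
        simp only [mul_inv_cancel] at this
        rw [← zpow_sub] at this
        simpa [two_mul, sub_neg_eq_add] using this
      have := zpow_eq_one_of_infinite hxinf h2i
      omega
    have hj : j = 0 := by
      have : y ^ j = 1 := by rw [hyj, hi]; simp
      exact zpow_eq_one_of_infinite (by rwa [hy]) this
    rw [hi, hj]
    simp
  -- conclude
  refine ⟨φ.range, ?_, ⟨?_⟩⟩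
  · rintro _ ⟨g, rfl⟩
    obtain ⟨i, j, rfl⟩ := bs_normal_form g
    rw [map_mul, map_zpow, map_zpow, hφc, hφd]
    exact K.mul_mem (K.zpow_mem hxK i) (K.zpow_mem hyK j)
  · exact (MonoidHom.ofInjective hinj).symm
end

section
/- In a free group, if α² lies in the cyclic subgroup ⟨β⟩ with α ≠ 1, then the subgroup ⟨α, β⟩ is cyclic; consequently, if β is not a square in the free group, then α ∈ ⟨β⟩. -/
theorem free_group_square_in_cyclic
    (α : Type) (x y : FreeGroup α) (hx : x ≠ 1)
    (hxy : x ^ 2 ∈ Subgroup.zpowers y) :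
    IsCyclic ↥(Subgroup.closure {x, y}) ∧
      ((¬ ∃ γ : FreeGroup α, y = γ ^ 2) → x ∈ Subgroup.zpowers y) := by
  obtain ⟨m, hm⟩ := Subgroup.mem_zpowers_iff.mp hxy
  set H : Subgroup (FreeGroup α) := Subgroup.closure {x, y} with hHdef
  have hxH : x ∈ H := Subgroup.subset_closure (by simp)
  have hyH : y ∈ H := Subgroup.subset_closure (by simp)
  set X : ↥H := ⟨x, hxH⟩ with hXdef
  set Y : ↥H := ⟨y, hyH⟩ with hYdef
  have hXY : X ^ (2 : ℤ) = Y ^ m := by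
    ext
    push_cast
    exact hm.symm
  have hgen : Subgroup.closure ({X, Y} : Set ↥H) = ⊤ := by
    rw [eq_top_iff, ← Subgroup.closure_closure_coe_preimage (k := ({x, y} : Set (FreeGroup α)))]
    apply Subgroup.closure_mono
    rintro w hw
    rcases hw with hw | hw
    · left; exact Subtype.ext hw
    · right; exact Subtype.ext hw
  let e : ↥H ≃* FreeGroup (IsFreeGroup.Generators ↥H) := IsFreeGroup.toFreeGroup ↥H
  by_cases hS : ∃ s t : IsFreeGroup.Generators ↥H, s ≠ t
  · exfalso
    obtain ⟨s, t, hst⟩ := hS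
    classical
    let f : IsFreeGroup.Generators ↥H → Multiplicative (ℤ × ℤ) := fun u =>
      Multiplicative.ofAdd
        (if u = s then ((1 : ℤ), (0 : ℤ)) else if u = t then ((0 : ℤ), (1 : ℤ))
          else ((0 : ℤ), (0 : ℤ)))
    let Φ : ↥H →* Multiplicative (ℤ × ℤ) := (FreeGroup.lift f).comp e.toMonoidHom
    have hmem : ∀ w : ↥H, Φ w ∈ Subgroup.closure ({Φ X, Φ Y} : Set (Multiplicative (ℤ × ℤ))) := by
      intro w
      have hw : w ∈ Subgroup.closure ({X, Y} : Set ↥H) := hgen ▸ Subgroup.mem_top w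
      have h2 := Subgroup.mem_map_of_mem Φ hw
      rwa [MonoidHom.map_closure, Set.image_pair] at h2
    have h10 : Multiplicative.ofAdd ((1 : ℤ), (0 : ℤ)) ∈
        Subgroup.closure ({Φ X, Φ Y} : Set (Multiplicative (ℤ × ℤ))) := by
      have h := hmem (e.symm (FreeGroup.of s))
      have heq : Φ (e.symm (FreeGroup.of s)) = Multiplicative.ofAdd ((1 : ℤ), (0 : ℤ)) := by
        simp [Φ, f]
      rwa [heq] at h
    have h01 : Multiplicative.ofAdd ((0 : ℤ), (1 : ℤ)) ∈
        Subgroup.closure ({Φ X, Φ Y} : Set (Multiplicative (ℤ × ℤ))) := by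
      have h := hmem (e.symm (FreeGroup.of t))
      have heq : Φ (e.symm (FreeGroup.of t)) = Multiplicative.ofAdd ((0 : ℤ), (1 : ℤ)) := by
        simp [Φ, f, hst.symm, if_neg]
      rwa [heq] at h
    obtain ⟨p, q, hpq⟩ := Subgroup.mem_closure_pair.mp h10
    obtain ⟨r, s', hrs⟩ := Subgroup.mem_closure_pair.mp h01
    have hrel : (Φ X) ^ (2 : ℤ) = (Φ Y) ^ m := by
      rw [← map_zpow, ← map_zpow, hXY]
    set a := (Multiplicative.toAdd (Φ X)).1 with ha
    set b := (Multiplicative.toAdd (Φ X)).2 with hb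
    set c := (Multiplicative.toAdd (Φ Y)).1 with hc
    set d := (Multiplicative.toAdd (Φ Y)).2 with hd
    have e1 : p * a + q * c = 1 := by
      have := congrArg (fun z => (Multiplicative.toAdd z).1) hpq
      simpa [smul_eq_mul, mul_comm] using this
    have e2 : p * b + q * d = 0 := by
      have := congrArg (fun z => (Multiplicative.toAdd z).2) hpq
      simpa [smul_eq_mul, mul_comm] using this
    have e3 : r * a + s' * c = 0 := by
      have := congrArg (fun z => (Multiplicative.toAdd z).1) hrs
      simpa [smul_eq_mul, mul_comm] using this
    have e4 : r * b + s' * d = 1 := by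
      have := congrArg (fun z => (Multiplicative.toAdd z).2) hrs
      simpa [smul_eq_mul, mul_comm] using this
    have e5 : 2 * a = m * c := by
      have := congrArg (fun z => (Multiplicative.toAdd z).1) hrel
      simpa [smul_eq_mul, mul_comm] using this
    have e6 : 2 * b = m * d := by
      have := congrArg (fun z => (Multiplicative.toAdd z).2) hrel
      simpa [smul_eq_mul, mul_comm] using this
    have hdet : a * d - b * c = 0 := by
      have h2 : 2 * (a * d - b * c) = (2 * a) * d - (2 * b) * c := by ring
      rw [e5, e6] at h2
      have h3 : (m * c) * d - (m * d) * c = 0 := by ring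
      linarith
    have hfinal : (p * a + q * c) * (r * b + s' * d) - (p * b + q * d) * (r * a + s' * c) =
        (p * s' - q * r) * (a * d - b * c) := by ring
    rw [e1, e2, e3, e4, hdet, mul_zero] at hfinal
    norm_num at hfinal
  · push_neg at hS
    rcases isEmpty_or_nonempty (IsFreeGroup.Generators ↥H) with hE | hN
    · exfalso
      have hsub : Subsingleton (FreeGroup (IsFreeGroup.Generators ↥H)) := by
        infer_instance
      have hX1 : X = 1 := e.injective (Subsingleton.elim _ _)
      have : x = 1 := by exact congrArg Subtype.val hX1
      exact hx this
    · obtain ⟨s₀⟩ := hN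
      set Z : ↥H := e.symm (FreeGroup.of s₀) with hZ
      have hall : ∀ W : ↥H, ∃ k : ℤ, Z ^ k = W := by
        intro W
        have h1 : e W ∈ Subgroup.closure
            (Set.range (FreeGroup.of : IsFreeGroup.Generators ↥H → _)) := by
          rw [FreeGroup.closure_range_of]; trivial
        have h2 : Set.range (FreeGroup.of : IsFreeGroup.Generators ↥H → _) =
            {FreeGroup.of s₀} := by
          ext w
          constructor
          · rintro ⟨u, rfl⟩
            rw [hS u s₀]
            rfl
          · rintro rfl
            exact ⟨s₀, rfl⟩
        rw [h2] at h1
        obtain ⟨k, hk⟩ := Subgroup.mem_closure_singleton.mp h1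
        refine ⟨k, ?_⟩
        have := congrArg e.symm hk
        rwa [map_zpow, ← hZ, e.symm_apply_apply] at this
      have hinj : ∀ k l : ℤ, Z ^ k = Z ^ l → k = l := by
        intro k l h
        have h1 : (FreeGroup.of s₀) ^ k = (FreeGroup.of s₀) ^ l := by
          have := congrArg e h
          rwa [map_zpow, map_zpow, hZ, e.apply_symm_apply] at this
        have h2 := congrArg (FreeGroup.lift fun _ => Multiplicative.ofAdd (1 : ℤ)) h1
        rw [map_zpow, map_zpow, FreeGroup.lift_apply_of] at h2
        simpa [← ofAdd_zsmul] using h2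
      obtain ⟨aZ, haZ⟩ := hall X
      obtain ⟨bZ, hbZ⟩ := hall Y
      have hab : aZ * 2 = bZ * m := by
        apply hinj
        rw [zpow_mul, zpow_mul, haZ, hbZ]
        exact hXY
      refine ⟨⟨⟨Z, fun W => Subgroup.mem_zpowers_iff.mpr (hall W)⟩⟩, ?_⟩
      intro hns
      rcases Int.even_or_odd bZ with ⟨c, hcc⟩ | ⟨c, hcc⟩
      · exfalso
        apply hns
        refine ⟨((Z ^ c : ↥H) : FreeGroup α), ?_⟩
        have hY2 : Y = (Z ^ c) ^ (2 : ℤ) := by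
          rw [← hbZ, ← zpow_mul, hcc]
          ring_nf
        have : y = ((Y : FreeGroup α)) := rfl
        rw [this, hY2]
        push_cast
        exact_mod_cast rfl
      · have hme : Even m := by
          have heven : Even (bZ * m) := ⟨aZ, by linarith⟩
          rcases Int.even_mul.mp heven with h | h
          · exfalso
            obtain ⟨u, hu⟩ := h
            omega
          · exact h
        obtain ⟨m', hm'⟩ := hme
        have haa : aZ = bZ * m' := by
          have h1 : aZ * 2 = 2 * (bZ * m') := by rw [hab, hm']; ring
          linarith
        refine Subgroup.mem_zpowers_iff.mpr ⟨m', ?_⟩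
        have hYX : Y ^ m' = X := by
          rw [← haZ, ← hbZ, ← zpow_mul, ← haa]
        have hyY : y ^ m' = ((Y ^ m' : ↥H) : FreeGroup α) := by push_cast; rfl
        rw [hyY, hYX]
end
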